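/- arXiv:0806.2500 — 8 statements merged into one kernel-verified Lean document; each statement's English description precedes it below -/
import Mathlib

section
/- Let γ > 1 be a real number and define h : [0,1) → ℝ by h(x) = x^γ(1−x)/(1−x^γ) for x ∈ (0,1) and h(0) = 0. Then the supremum of h over [0,1) equals 1/γ. -/
open Real Filter Set Topology

private lemma key_ineq (γ : ℝ) (hγ : 1 < γ) {x : ℝ} (hx0 : 0 < x) (hx1 : x < 1) :
    x ^ γ + γ * (x ^ γ * (1 - x)) ≤ 1 := by
  have hs : (-1 : ℝ) ≤ (1 - x) / x := by
    have : (0:ℝ) ≤ (1 - x) / x := div_nonneg (by linarith) hx0.le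
    linarith
  have hB := one_add_mul_self_le_rpow_one_add hs hγ.le
  have h1x : 1 + (1 - x) / x = x⁻¹ := by field_simp; ring
  rw [h1x, Real.inv_rpow hx0.le] at hB
  have hxγ : (0:ℝ) < x ^ γ := Real.rpow_pos_of_pos hx0 γ
  have h2 : 1 + γ * (1 - x) ≤ (x ^ γ)⁻¹ := by
    refine le_trans ?_ hB
    have : (1 - x) ≤ (1 - x) / x := by
      rw [le_div_iff₀ hx0]
      nlinarith
    nlinarith
  have := mul_le_mul_of_nonneg_left h2 hxγ.le
  rw [mul_inv_cancel₀ hxγ.ne'] at this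
  nlinarith

private lemma h_le (γ : ℝ) (hγ : 1 < γ) {x : ℝ} (hx : x ∈ Set.Ico (0:ℝ) 1) :
    x ^ γ * (1 - x) / (1 - x ^ γ) ≤ 1 / γ := by
  obtain ⟨hx0, hx1⟩ := hx
  have hγ0 : (0:ℝ) < γ := by linarith
  rcases eq_or_lt_of_le hx0 with rfl | hx0
  · rw [Real.zero_rpow (by positivity : γ ≠ 0)]
    simp
    positivity
  · have hxγ : x ^ γ < 1 := Real.rpow_lt_one hx0.le hx1 (by linarith)
    have hpos : 0 < 1 - x ^ γ := by linarith
    rw [div_le_div_iff₀ hpos hγ0]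
    have := key_ineq γ hγ hx0 hx1
    nlinarith

private lemma h_tendsto (γ : ℝ) (hγ : 1 < γ) :
    Tendsto (fun x : ℝ => x ^ γ * (1 - x) / (1 - x ^ γ)) (𝓝[<] (1:ℝ)) (𝓝 (1 / γ)) := by
  have hd : HasDerivAt (fun x : ℝ => x ^ γ) γ 1 := by
    have := Real.hasDerivAt_rpow_const (x := (1:ℝ)) (p := γ) (Or.inl one_ne_zero)
    simpa using this
  have hslope := hasDerivAt_iff_tendsto_slope.mp hd
  have hγ0 : γ ≠ 0 := by positivity
  have hinv : Tendsto (fun x : ℝ => (slope (fun y : ℝ => y ^ γ) 1 x)⁻¹) (𝓝[≠] (1:ℝ)) (𝓝 γ⁻¹) :=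
    hslope.inv₀ hγ0
  have hpow : Tendsto (fun x : ℝ => x ^ γ) (𝓝[≠] (1:ℝ)) (𝓝 1) := by
    have : ContinuousAt (fun x : ℝ => x ^ γ) 1 :=
      Real.continuousAt_rpow_const 1 γ (Or.inl one_ne_zero)
    have := this.tendsto.mono_left (nhdsWithin_le_nhds (s := {(1:ℝ)}ᶜ))
    simpa using this
  have hmul := hpow.mul hinv
  rw [one_mul] at hmul
  have heq : ∀ x : ℝ, x ^ γ * (slope (fun y : ℝ => y ^ γ) 1 x)⁻¹
      = x ^ γ * (1 - x) / (1 - x ^ γ) := by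
    intro x
    rw [slope_def_field, Real.one_rpow, inv_div, mul_div_assoc]
    congr 1
    rw [← neg_div_neg_eq]
    ring_nf
  have : Tendsto (fun x : ℝ => x ^ γ * (1 - x) / (1 - x ^ γ)) (𝓝[≠] (1:ℝ)) (𝓝 γ⁻¹) := by
    refine hmul.congr fun x => heq x
  rw [one_div]
  exact this.mono_left (nhdsWithin_mono _ fun y hy => ne_of_lt hy)

/-- **Lemma 2 of the paper.** For `γ > 1`, the supremum of
`h(x) = x^γ (1-x) / (1 - x^γ)` over the half-open interval `[0,1)` equals `1/γ`.
(Note `h(0) = 0` since `0^γ = 0` for `γ > 1`.) -/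
theorem sup_h_eq_inv_gamma (γ : ℝ) (hγ : 1 < γ) :
    IsLUB ((fun x : ℝ => x ^ γ * (1 - x) / (1 - x ^ γ)) '' Set.Ico (0 : ℝ) 1) (1 / γ) := by
  constructor
  · rintro y ⟨x, hx, rfl⟩
    exact h_le γ hγ hx
  · intro b hb
    have hne : (𝓝[Set.Ico (0:ℝ) 1] (1:ℝ)).NeBot := by
      apply mem_closure_iff_nhdsWithin_neBot.mp
      rw [closure_Ico (by norm_num : (0:ℝ) ≠ 1)]
      exact ⟨le_of_lt one_pos, le_refl 1⟩
    have ht : Tendsto (fun x : ℝ => x ^ γ * (1 - x) / (1 - x ^ γ))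
        (𝓝[Set.Ico (0:ℝ) 1] (1:ℝ)) (𝓝 (1 / γ)) :=
      (h_tendsto γ hγ).mono_left (nhdsWithin_mono _ fun y hy => hy.2)
    refine le_of_tendsto ht ?_
    filter_upwards [self_mem_nhdsWithin] with x hx
    exact hb ⟨x, hx, rfl⟩
end

section
/- Let γ > 1 be a real number and define h(x) = x^γ(1−x)/(1−x^γ) on (0,1). Then h is strictly increasing on (0,1) and lim_{x→1⁻} h(x) = 1/γ. -/
open Set Filter Real

private lemma hasDerivAt_one_sub_rpow (p : ℝ) {t : ℝ} (ht : t < 1) :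
    HasDerivAt (fun t : ℝ => (1 - t) ^ p) (-(p * (1 - t) ^ (p - 1))) t := by
  have h1 : HasDerivAt (fun t : ℝ => 1 - t) (-1) t := by
    simpa using (hasDerivAt_id t).const_sub 1
  have h2 : HasDerivAt (fun y : ℝ => y ^ p) (p * (1 - t) ^ (p - 1)) (1 - t) :=
    Real.hasDerivAt_rpow_const (Or.inl (by linarith))
  have := h2.comp t h1
  simpa [mul_comm, Function.comp_def] using this

private lemma strictConvexOn_aux (γ : ℝ) (hγ : 1 < γ) :
    StrictConvexOn ℝ (Set.Ico (0 : ℝ) 1) (fun t : ℝ => (1 - t) ^ (-γ)) := by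
  apply strictConvexOn_of_deriv2_pos (convex_Ico 0 1)
  · intro t ht
    exact (hasDerivAt_one_sub_rpow (-γ) ht.2).continuousAt.continuousWithinAt
  · intro x hx
    rw [interior_Ico] at hx
    have hx1 : x < 1 := hx.2
    have hEq : Set.EqOn (deriv fun t : ℝ => (1 - t) ^ (-γ))
        (fun t : ℝ => γ * (1 - t) ^ (-γ - 1)) (Set.Iio 1) := by
      intro t ht
      have := (hasDerivAt_one_sub_rpow (-γ) ht).deriv
      rw [this]; ring
    have hmem : Set.Iio (1 : ℝ) ∈ nhds x := Iio_mem_nhds hx1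
    have hEv : (deriv fun t : ℝ => (1 - t) ^ (-γ)) =ᶠ[nhds x]
        (fun t : ℝ => γ * (1 - t) ^ (-γ - 1)) :=
      Filter.eventuallyEq_of_mem hmem hEq
    have h2 : deriv^[2] (fun t : ℝ => (1 - t) ^ (-γ)) x
        = deriv (fun t : ℝ => γ * (1 - t) ^ (-γ - 1)) x := by
      show deriv (deriv fun t : ℝ => (1 - t) ^ (-γ)) x = _
      exact Filter.EventuallyEq.deriv_eq hEv
    have h3 : HasDerivAt (fun t : ℝ => γ * (1 - t) ^ (-γ - 1))
        (γ * -((-γ - 1) * (1 - x) ^ (-γ - 1 - 1))) x :=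
      (hasDerivAt_one_sub_rpow (-γ - 1) hx1).const_mul γ
    rw [h2, h3.deriv]
    have h4 : γ * -((-γ - 1) * (1 - x) ^ (-γ - 1 - 1))
        = γ * (γ + 1) * (1 - x) ^ (-γ - 1 - 1) := by ring
    rw [h4]
    have hpos : (0 : ℝ) < (1 - x) ^ (-γ - 1 - 1) :=
      Real.rpow_pos_of_pos (by linarith) _
    positivity

/-- For `γ > 1`, the function `h(x) = x^γ (1-x) / (1 - x^γ)` is strictly increasing on
`(0,1)` and tends to `1/γ` as `x → 1⁻`. -/
theorem h_strictMonoOn_and_tendsto (γ : ℝ) (hγ : 1 < γ) :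
    StrictMonoOn (fun x : ℝ => x ^ γ * (1 - x) / (1 - x ^ γ)) (Set.Ioo (0 : ℝ) 1) ∧
    Filter.Tendsto (fun x : ℝ => x ^ γ * (1 - x) / (1 - x ^ γ))
      (nhdsWithin 1 (Set.Iio (1 : ℝ))) (nhds (1 / γ)) := by
  have hγ0 : (0 : ℝ) < γ := by linarith
  have key : ∀ x ∈ Set.Ioo (0 : ℝ) 1,
      x ^ γ * (1 - x) / (1 - x ^ γ) = ((x ^ (-γ) - 1) / (1 - x))⁻¹ ∧
      0 < (x ^ (-γ) - 1) / (1 - x) := by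
    intro x hx
    have hx0 : 0 < x := hx.1
    have hx1 : x < 1 := hx.2
    have hxγpos : 0 < x ^ γ := Real.rpow_pos_of_pos hx0 γ
    have hxγlt : x ^ γ < 1 := Real.rpow_lt_one hx0.le hx1 hγ0
    have hneg : x ^ (-γ) = (x ^ γ)⁻¹ := Real.rpow_neg hx0.le γ
    have hgt : 1 < x ^ (-γ) := by
      rw [hneg]
      exact (one_lt_inv₀ hxγpos).mpr hxγlt
    constructor
    · have h3 : (x ^ γ)⁻¹ - 1 = (1 - x ^ γ) / (x ^ γ) := by
        field_simp
      rw [inv_div, hneg, h3, div_div_eq_mul_div, mul_comm]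
    · apply div_pos (by linarith) (by linarith)
  constructor
  · -- strict monotonicity
    intro x hx y hy hxy
    have hcv := strictConvexOn_aux γ hγ
    have h0 : (0 : ℝ) ∈ Set.Ico (0 : ℝ) 1 := ⟨le_refl _, one_pos⟩
    have hu : (1 - y) ∈ Set.Ico (0 : ℝ) 1 := ⟨by linarith [hy.2], by linarith [hy.1]⟩
    have hv : (1 - x) ∈ Set.Ico (0 : ℝ) 1 := ⟨by linarith [hx.2], by linarith [hx.1]⟩
    have hsec := hcv.secant_strict_mono h0 hu hv
      (by intro h; have := sub_eq_zero.mp h; linarith [hy.2])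
      (by intro h; have := sub_eq_zero.mp h; linarith [hx.2])
      (by linarith)
    simp only [sub_zero, sub_sub_cancel, Real.one_rpow] at hsec
    obtain ⟨hxeq, hxpos⟩ := key x hx
    obtain ⟨hyeq, hypos⟩ := key y hy
    simp only
    rw [hxeq, hyeq]
    exact inv_strictAnti₀ hypos hsec
  · -- the limit
    have hd : HasDerivAt (fun x : ℝ => x ^ γ) γ 1 := by
      simpa using Real.hasDerivAt_rpow_const (x := (1:ℝ)) (p := γ) (Or.inl one_ne_zero)
    have hslope : Filter.Tendsto (slope (fun x : ℝ => x ^ γ) 1)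
        (nhdsWithin 1 {(1:ℝ)}ᶜ) (nhds γ) := hasDerivAt_iff_tendsto_slope.mp hd
    have hslope' : Filter.Tendsto (slope (fun x : ℝ => x ^ γ) 1)
        (nhdsWithin 1 (Set.Iio (1:ℝ))) (nhds γ) :=
      hslope.mono_left (nhdsWithin_mono 1 (fun x hx => ne_of_lt hx))
    have hinv : Filter.Tendsto (fun x => (slope (fun x : ℝ => x ^ γ) 1 x)⁻¹)
        (nhdsWithin 1 (Set.Iio (1:ℝ))) (nhds γ⁻¹) := hslope'.inv₀ (by positivity)
    have hcont : Filter.Tendsto (fun x : ℝ => x ^ γ)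
        (nhdsWithin 1 (Set.Iio (1:ℝ))) (nhds 1) := by
      have : ContinuousAt (fun x : ℝ => x ^ γ) 1 :=
        Real.continuousAt_rpow_const 1 γ (Or.inl one_ne_zero)
      simpa using this.continuousWithinAt.tendsto
    have hmul := hcont.mul hinv
    rw [one_mul] at hmul
    rw [one_div]
    apply hmul.congr
    intro x
    have hs : slope (fun x : ℝ => x ^ γ) 1 x = (x ^ γ - 1) / (x - 1) := by
      rw [slope_def_field, Real.one_rpow]
    rw [hs, inv_div, mul_div_assoc]
    congr 1
    rw [← neg_div_neg_eq]
    ring_nf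
end

section
/- Let p > 1 be a real number and θ ∈ [0,1). Define p₁ = (1/8)·(1 + 2θ^{2p} − 4θ^{2p+1} + θ^{4p}) and p₂ = (1/8)·(1 − θ^{2p})². Then 2·(p₁ + p₂ − 2√(p₁·p₂)) ≤ 1/(2p²). -/
set_option maxHeartbeats 1000000


/-- The squared Hellinger distance between the CFN quartet distributions of the topologies
`12|34` and `13|24` (with terminal edge parameters `θ^p` and interior edge parameter `θ`),
namely `2(p₁ + p₂ - 2√(p₁p₂))` with `p₁ = (1/8)(1 + 2θ^{2p} - 4θ^{2p+1} + θ^{4p})` and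
`p₂ = (1/8)(1 - θ^{2p})²`, is at most `1/(2p²)`. -/
theorem hellinger_sq_le_inv_two_p_sq (p θ : ℝ) (hp : 1 < p) (hθ : θ ∈ Set.Ico (0 : ℝ) 1) :
    2 * ((1 / 8) * (1 + 2 * θ ^ (2 * p) - 4 * θ ^ (2 * p + 1) + θ ^ (4 * p)) +
        (1 / 8) * (1 - θ ^ (2 * p)) ^ 2 -
        2 * Real.sqrt ((1 / 8) * (1 + 2 * θ ^ (2 * p) - 4 * θ ^ (2 * p + 1) + θ ^ (4 * p)) *
          ((1 / 8) * (1 - θ ^ (2 * p)) ^ 2))) ≤ 1 / (2 * p ^ 2) := by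
  obtain ⟨hθ0, hθ1⟩ := hθ
  have hp0 : 0 < p := by linarith
  have hrhs : (0:ℝ) < 1 / (2 * p ^ 2) := by positivity
  rcases eq_or_lt_of_le hθ0 with h0 | h0
  · -- θ = 0
    rw [← h0, Real.zero_rpow (by positivity), Real.zero_rpow (by positivity),
      Real.zero_rpow (by positivity)]
    have hs : Real.sqrt (1 / 8 * (1 + 2 * 0 - 4 * 0 + 0) * (1 / 8 * (1 - 0) ^ 2)) = 1/8 := by
      rw [show (1:ℝ) / 8 * (1 + 2 * 0 - 4 * 0 + 0) * (1 / 8 * (1 - 0) ^ 2) = (1/8)^2 by ring,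
        Real.sqrt_sq (by norm_num)]
    rw [hs]
    norm_num
    positivity
  · -- θ > 0
    have hxpos : (0:ℝ) < θ ^ (2*p) := Real.rpow_pos_of_pos h0 _
    set x := θ ^ (2*p) with hxdef
    have hx1 : x < 1 := Real.rpow_lt_one hθ0 hθ1 (by positivity)
    -- key Bernoulli inequality: 2p·x·(1-θ) ≤ 1 - x
    have hbern : 1 + (2*p) * ((1-θ)/θ) ≤ (1 + (1-θ)/θ) ^ (2*p) := by
      apply one_add_mul_self_le_rpow_one_add _ (by linarith)
      have : 0 ≤ (1-θ)/θ := div_nonneg (by linarith) h0.le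
      linarith
    have h1t : (1 + (1-θ)/θ) = θ⁻¹ := by field_simp; ring
    have hkey : 2*p*(x*(1-θ)) ≤ 1 - x := by
      rw [h1t] at hbern
      have hinv' : (θ⁻¹ : ℝ) ^ (2*p) = x⁻¹ := by
        rw [Real.inv_rpow hθ0]
      rw [hinv'] at hbern
      have hmul := mul_le_mul_of_nonneg_left hbern hxpos.le
      rw [mul_inv_cancel₀ (ne_of_gt hxpos)] at hmul
      have hdiv : (1-θ) ≤ (1-θ)/θ := by
        rw [le_div_iff₀ h0]
        nlinarith
      nlinarith [mul_le_mul_of_nonneg_left hdiv (show (0:ℝ) ≤ 2*p*x by positivity)]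
    have h2p1 : θ ^ (2*p+1) = x*θ := Real.rpow_add_one (ne_of_gt h0) _
    have h4p : θ ^ (4*p) = x^2 := by
      rw [show (4*p) = (2*p)*2 by ring, Real.rpow_mul hθ0, Real.rpow_two]
    rw [h2p1, h4p]
    set P1 := (1/8) * (1 + 2*x - 4*(x*θ) + x^2) with hP1def
    set P2 := (1/8) * (1 - x)^2 with hP2def
    have hP10 : 0 ≤ P1 := by nlinarith [sq_nonneg (1-x), mul_nonneg hxpos.le hθ0]
    have hP20 : 0 < P2 := by
      have h1x : 0 < 1 - x := by linarith
      positivity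
    set A := Real.sqrt P1 with hAdef
    set B := Real.sqrt P2 with hBdef
    have hsq : Real.sqrt (P1 * P2) = A * B := Real.sqrt_mul hP10 _
    have hA2 : A^2 = P1 := Real.sq_sqrt hP10
    have hB2 : B^2 = P2 := Real.sq_sqrt hP20.le
    have hBpos : 0 < B := Real.sqrt_pos.mpr hP20
    have hP12 : P1 - P2 = x*(1-θ)/2 := by rw [hP1def, hP2def]; ring
    have hBA : B ≤ A := Real.sqrt_le_sqrt (by nlinarith [mul_nonneg hxpos.le (show (0:ℝ) ≤ 1-θ by linarith)])
    have hABs : (A-B)*(A+B) = x*(1-θ)/2 := by linear_combination hA2 - hB2 + hP12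
    -- 8pB(A-B) ≤ 1 - x
    have h8 : 8*p*B*(A-B) ≤ 1 - x := by
      have step1 : (A-B)*(2*B) ≤ x*(1-θ)/2 := by nlinarith [sq_nonneg (A-B), hABs]
      have step2 := mul_le_mul_of_nonneg_left step1 (show (0:ℝ) ≤ 4*p by linarith)
      linarith [hkey, step2]
    have h8nn : 0 ≤ 8*p*B*(A-B) := by
      have := sub_nonneg.2 hBA
      positivity
    have h8sq : (8*p*B*(A-B))^2 ≤ (1-x)^2 := pow_le_pow_left₀ h8nn h8 2
    have h1x8 : (1-x)^2 = 8*B^2 := by rw [hB2, hP2def]; ring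
    have hD2 : 8*p^2*(A-B)^2 ≤ 1 := by
      have hB2pos : (0:ℝ) < 8*B^2 := by positivity
      have hc : (8*B^2) * (8*p^2*(A-B)^2) ≤ (8*B^2) * 1 := by
        calc (8*B^2) * (8*p^2*(A-B)^2) = (8*p*B*(A-B))^2 := by ring
          _ ≤ (1-x)^2 := h8sq
          _ = 8*B^2 := h1x8
          _ = (8*B^2) * 1 := by ring
      exact le_of_mul_le_mul_left hc hB2pos
    rw [hsq, le_div_iff₀ (by positivity : (0:ℝ) < 2*p^2)]
    rw [← hA2, ← hB2]
    linarith [hD2, sq_nonneg (p*(A-B))]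
end

section
/- Let p > 1 be a real number, θ ∈ (0,1), and let X₁,…,X_k be i.i.d. random variables taking values in {−1, 0, 1} with ℙ(X₁ = 1) = (1/8)·(1 + 2θ^{2p} − 4θ^{2p+1} + θ^{4p}) and ℙ(X₁ = −1) = (1/8)·(1 − θ^{2p})². Let Y_k = X₁ + ⋯ + X_k, μ_k = 𝔼[Y_k] and σ_k = √(Var(Y_k)). Then σ_k > 0 and μ_k/σ_k ≥ √k · θ^{2p} · (1 − θ). -/
open scoped BigOperators
open MeasureTheory ProbabilityTheory

/-- **Lemma 3, part (3), of the paper.** If `X₁, …, X_k` (`k ≥ 1`) are i.i.d. random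
variables with values in `{-1, 0, 1}`, where `ℙ(X₁ = 1)` and `ℙ(X₁ = -1)` are the CFN
probabilities of the site-pattern classes `{ααββ, ββαα}` and `{αβαβ, βαβα}`, then the mean
`μ_k` and standard deviation `σ_k` of `Y_k = X₁ + ⋯ + X_k` satisfy `σ_k > 0` and
`μ_k / σ_k ≥ √k · θ^{2p} (1-θ)`. -/
theorem parsimony_difference_mean_div_sd_lower_bound
    {Ω : Type*} [MeasureSpace Ω] [IsProbabilityMeasure (ℙ : Measure Ω)]
    (p θ : ℝ) (hp : 1 < p) (hθ : θ ∈ Set.Ioo (0 : ℝ) 1)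
    (k : ℕ) (hk : 0 < k) (X : Fin k → Ω → ℝ)
    (hmeas : ∀ i, Measurable (X i))
    (hval : ∀ i ω, X i ω = -1 ∨ X i ω = 0 ∨ X i ω = 1)
    (hindep : iIndepFun X ℙ)
    (h1 : ∀ i, (ℙ {ω | X i ω = 1}).toReal =
      (1 / 8) * (1 + 2 * θ ^ (2 * p) - 4 * θ ^ (2 * p + 1) + θ ^ (4 * p)))
    (hm1 : ∀ i, (ℙ {ω | X i ω = -1}).toReal = (1 / 8) * (1 - θ ^ (2 * p)) ^ 2) :
    0 < Real.sqrt (variance (fun ω => ∑ i : Fin k, X i ω) ℙ) ∧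
    (∫ ω, (∑ i : Fin k, X i ω) ∂ℙ) / Real.sqrt (variance (fun ω => ∑ i : Fin k, X i ω) ℙ) ≥
      Real.sqrt k * θ ^ (2 * p) * (1 - θ) := by
  obtain ⟨hθ0, hθ1⟩ := hθ
  set t : ℝ := θ ^ (2 * p) with htdef
  have ht0 : 0 < t := Real.rpow_pos_of_pos hθ0 _
  have ht1 : t < 1 := Real.rpow_lt_one hθ0.le hθ1 (by linarith)
  have hpow1 : θ ^ (2 * p + 1) = t * θ := by
    rw [htdef, Real.rpow_add hθ0, Real.rpow_one]
  have hpow2 : θ ^ (4 * p) = t ^ 2 := by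
    rw [htdef, show (4 : ℝ) * p = 2 * p + 2 * p by ring, Real.rpow_add hθ0, sq]
  -- per-variable structure
  have hℒ : ∀ i, MemLp (X i) 2 ℙ := by
    intro i
    refine MemLp.of_bound (hmeas i).aestronglyMeasurable 1 (ae_of_all _ fun ω => ?_)
    rcases hval i ω with h | h | h <;> simp [h]
  have hmA : ∀ i, MeasurableSet {ω | X i ω = 1} := fun i =>
    (hmeas i) (measurableSet_singleton 1)
  have hmB : ∀ i, MeasurableSet {ω | X i ω = -1} := fun i =>
    (hmeas i) (measurableSet_singleton (-1))
  set m : ℝ := t * (1 - θ) / 2 with hmdef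
  set v : ℝ := (1 + t ^ 2 - 2 * t * θ) / 4 - (t * (1 - θ) / 2) ^ 2 with hvdef
  have hint : ∀ i, (∫ ω, X i ω ∂ℙ) = m := by
    intro i
    have hfun : (fun ω => X i ω) = fun ω =>
        ({ω | X i ω = 1}).indicator (fun _ => (1:ℝ)) ω
          - ({ω | X i ω = -1}).indicator (fun _ => (1:ℝ)) ω := by
      funext ω
      rcases hval i ω with h | h | h <;>
        simp [Set.indicator_apply, h, Set.mem_setOf_eq] <;> norm_num
    rw [hfun, integral_sub ((integrable_const (1:ℝ)).indicator (hmA i))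
      ((integrable_const (1:ℝ)).indicator (hmB i)),
      integral_indicator_const _ (hmA i), integral_indicator_const _ (hmB i)]
    rw [smul_eq_mul, smul_eq_mul, mul_one, mul_one, measureReal_def, measureReal_def, h1 i, hm1 i, hmdef, hpow1, hpow2]
    ring
  have hintsq : ∀ i, (∫ ω, (X i ω) ^ 2 ∂ℙ) = (1 + t ^ 2 - 2 * t * θ) / 4 := by
    intro i
    have hfun : (fun ω => (X i ω) ^ 2) = fun ω =>
        ({ω | X i ω = 1}).indicator (fun _ => (1:ℝ)) ω
          + ({ω | X i ω = -1}).indicator (fun _ => (1:ℝ)) ω := by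
      funext ω
      rcases hval i ω with h | h | h <;>
        simp [Set.indicator_apply, h, Set.mem_setOf_eq] <;> norm_num
    rw [hfun, integral_add ((integrable_const (1:ℝ)).indicator (hmA i))
      ((integrable_const (1:ℝ)).indicator (hmB i)),
      integral_indicator_const _ (hmA i), integral_indicator_const _ (hmB i)]
    rw [smul_eq_mul, smul_eq_mul, mul_one, mul_one, measureReal_def, measureReal_def, h1 i, hm1 i, hpow1, hpow2]
    ring
  have hvar : ∀ i, variance (X i) ℙ = v := by
    intro i
    rw [variance_eq_sub (hℒ i)]
    have : (∫ ω, (X i ^ 2) ω ∂ℙ) = (1 + t ^ 2 - 2 * t * θ) / 4 := by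
      simpa [Pi.pow_apply] using hintsq i
    rw [this, hint i, hvdef, hmdef]
  -- sum
  have hsumfun : (fun ω => ∑ i : Fin k, X i ω) = ∑ i : Fin k, X i := by
    funext ω; simp
  have hvarsum : variance (fun ω => ∑ i : Fin k, X i ω) ℙ = k * v := by
    rw [hsumfun, IndepFun.variance_sum (fun i _ => hℒ i)
      (fun i _ j _ hij => hindep.indepFun hij)]
    simp [hvar, Finset.sum_const, nsmul_eq_mul]
  have hintsum : (∫ ω, (∑ i : Fin k, X i ω) ∂ℙ) = k * m := by
    rw [integral_finset_sum _ (fun i _ => (hℒ i).integrable one_le_two)]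
    simp [hint, Finset.sum_const, nsmul_eq_mul]
  -- numeric facts
  have hv0 : 0 < v := by
    rw [hvdef]
    nlinarith [sq_nonneg (1 - t * θ), mul_pos ht0 hθ0, sq_nonneg t, mul_pos (mul_pos ht0 ht0) (mul_pos hθ0 (show (0:ℝ) < 1 - θ by linarith))]
  have hv4 : v ≤ 1 / 4 := by
    rw [hvdef]
    nlinarith [mul_pos ht0 hθ0, sq_nonneg t]
  have hk0 : (0 : ℝ) < k := by exact_mod_cast hk
  have hσ : 0 < Real.sqrt (variance (fun ω => ∑ i : Fin k, X i ω) ℙ) := by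
    rw [hvarsum]; exact Real.sqrt_pos.2 (by positivity)
  refine ⟨hσ, ?_⟩
  rw [hvarsum, hintsum, Real.sqrt_mul hk0.le]
  set sk : ℝ := Real.sqrt k with hskdef
  set sv : ℝ := Real.sqrt v with hsvdef
  have hsk0 : 0 < sk := Real.sqrt_pos.2 hk0
  have hsv0 : 0 < sv := Real.sqrt_pos.2 hv0
  have hsk2 : sk * sk = (k : ℝ) := Real.mul_self_sqrt hk0.le
  have hsvle : sv ≤ 1 / 2 := by
    rw [hsvdef]
    calc Real.sqrt v ≤ Real.sqrt (1 / 4) := Real.sqrt_le_sqrt hv4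
    _ = 1 / 2 := by rw [show (1/4:ℝ) = (1/2)^2 by norm_num, Real.sqrt_sq (by norm_num)]
  have hm0 : 0 < m := by
    rw [hmdef]
    nlinarith
  rw [ge_iff_le, le_div_iff₀ (mul_pos hsk0 hsv0)]
  have key : sk * t * (1 - θ) * (sk * sv) = (k : ℝ) * (t * (1 - θ)) * sv := by
    rw [← hsk2]; ring
  rw [key, hmdef]
  have h1θ : 0 < 1 - θ := by linarith
  nlinarith [mul_le_mul_of_nonneg_left hsvle
    (mul_nonneg (mul_nonneg hk0.le ht0.le) h1θ.le)]
end

section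
/- Let p > 1 be a real number, θ ∈ (0,1), and let k site patterns be drawn i.i.d. from the CFN quartet distribution on {α,β}^4 for topology 12|34 with edge parameter θ^p on each terminal edge and θ on the interior edge. Let Y_k be the number of sampled patterns lying in {ααββ, ββαα} minus the number lying in {αβαβ, βαβα}, and let Ỹ_k be the number of sampled patterns lying in {ααββ, ββαα} minus the number lying in {αββα, βααβ}. Then ℙ(Y_k > 0 and Ỹ_k > 0) ≥ 1 − 2·exp(−k·θ^{4p}·(1−θ)²/8). -/
open scoped BigOperators

/-- The CFN transition matrix with edge parameter `η`. -/
noncomputable def cfnM (η : ℝ) (a b : Bool) : ℝ :=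
  if a = b then (1 + η) / 2 else (1 - η) / 2

/-- The CFN quartet distribution on `{α,β}^4` for the topology `12|34`, with interior edge
parameter `ηint` and common terminal edge parameter `ηterm`. -/
noncomputable def cfnQuartet12_34 (ηint ηterm : ℝ) (s : Fin 4 → Bool) : ℝ :=
  ∑ u : Bool, ∑ v : Bool,
    (1 / 2) * cfnM ηint u v * cfnM ηterm u (s 0) * cfnM ηterm u (s 1) *
      cfnM ηterm v (s 2) * cfnM ηterm v (s 3)

/-- `+1` if the site pattern lies in the class `{ααββ, ββαα}`, `-1` if it lies in the class
`{αβαβ, βαβα}`, and `0` otherwise. -/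
def scoreVs13_24 (s : Fin 4 → Bool) : ℤ :=
  (if s 0 = s 1 ∧ s 2 = s 3 ∧ s 0 ≠ s 2 then 1 else 0) -
    (if s 0 = s 2 ∧ s 1 = s 3 ∧ s 0 ≠ s 1 then 1 else 0)

/-- `+1` if the site pattern lies in the class `{ααββ, ββαα}`, `-1` if it lies in the class
`{αββα, βααβ}`, and `0` otherwise. -/
def scoreVs14_23 (s : Fin 4 → Bool) : ℤ :=
  (if s 0 = s 1 ∧ s 2 = s 3 ∧ s 0 ≠ s 2 then 1 else 0) -
    (if s 0 = s 3 ∧ s 1 = s 2 ∧ s 0 ≠ s 1 then 1 else 0)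

/-! ### Auxiliary lemmas -/

section Aux

lemma sum_pi_succ_mp {n : ℕ} {M : Type*} [AddCommMonoid M] (F : (Fin (n+1) → Bool) → M) :
    ∑ s : Fin (n+1) → Bool, F s = ∑ a : Bool, ∑ g : Fin n → Bool, F (Fin.cons a g) := by
  rw [← (Fin.consEquiv (fun _ : Fin (n+1) => Bool)).sum_comp, Fintype.sum_prod_type]
  rfl

lemma sum_pi4_mp {M : Type*} [AddCommMonoid M] (F : (Fin 4 → Bool) → M) :
    ∑ s : Fin 4 → Bool, F s
      = ∑ a : Bool, ∑ b : Bool, ∑ c : Bool, ∑ d : Bool, F ![a,b,c,d] := by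
  rw [sum_pi_succ_mp]
  refine Finset.sum_congr rfl fun a _ => ?_
  rw [sum_pi_succ_mp]
  refine Finset.sum_congr rfl fun b _ => ?_
  rw [sum_pi_succ_mp]
  refine Finset.sum_congr rfl fun c _ => ?_
  rw [sum_pi_succ_mp]
  refine Finset.sum_congr rfl fun d _ => ?_
  rw [Fintype.sum_unique]
  congr 1

lemma exp_cubic_le_mp (x : ℝ) (hx : 0 ≤ x) : 1 + x + x^2/2 + x^3/6 ≤ Real.exp x := by
  have h := Real.sum_le_exp_of_nonneg hx 4
  simp [Finset.sum_range_succ, Nat.factorial] at h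
  nlinarith [h]

lemma exp_neg_le_mp (x : ℝ) (hx : 0 ≤ x) : Real.exp (-x) ≤ 1 - x + x^2/2 := by
  have h := exp_cubic_le_mp x hx
  have hq : (0:ℝ) < 1 + x + x^2/2 + x^3/6 := by positivity
  have h1 : Real.exp (-x) ≤ (1 + x + x^2/2 + x^3/6)⁻¹ := by
    rw [Real.exp_neg]
    exact inv_anti₀ hq h
  refine h1.trans ?_
  rw [inv_le_iff_one_le_mul₀ hq]
  nlinarith [pow_nonneg hx 3, pow_nonneg hx 4, pow_nonneg hx 5]

lemma key_ineq_mp (B μ E : ℝ) (hB0 : 0 ≤ B) (hB : B ≤ 1/8) (hμ0 : 0 < μ) (hμ : μ ≤ 1/2)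
    (hE0 : 0 < E) (hE1 : 1 - μ ≤ E) (hE2 : E ≤ 1 - μ + μ^2/2) :
    B*(E + E⁻¹ - 2) + μ*(E-1) + μ^2/2 ≤ 0 := by
  have hmain : B*(E-1)^2 + μ*E*(E-1) + μ^2/2*E ≤ 0 := by
    set d := 1 - E with hd
    have hd1 : μ - μ^2/2 ≤ d := by simp only [hd]; linarith
    have hd2 : d ≤ μ := by simp only [hd]; linarith
    have hd0 : 0 ≤ d := by nlinarith
    have h1 : B*d^2 ≤ 1/8 * μ^2 := by
      nlinarith [mul_nonneg (by linarith : (0:ℝ) ≤ 1/8 - B) (sq_nonneg d),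
        mul_nonneg (by linarith : (0:ℝ) ≤ μ - d) (by linarith : (0:ℝ) ≤ μ + d)]
    have ha : (0:ℝ) ≤ 1 - d := by linarith
    have hb : μ*(1-μ)/2 ≤ d - μ/2 := by nlinarith
    have h2 : μ*(1-μ)*(μ*(1-μ)/2) ≤ μ*(1-d)*(d - μ/2) := by
      have h1μ : (0:ℝ) ≤ 1 - μ := by linarith
      have := mul_le_mul (mul_le_mul (le_refl μ) (by linarith : 1-μ ≤ 1-d)
        h1μ (le_of_lt hμ0)) hb (by nlinarith) (by nlinarith)
      linarith
    have h3 : μ^2/8 ≤ μ*(1-μ)*(μ*(1-μ)/2) := by nlinarith [sq_nonneg (1 - 2*μ)]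
    nlinarith [h1, h2, h3]
  have heq : B*(E + E⁻¹ - 2) + μ*(E-1) + μ^2/2
      = (B*(E-1)^2 + μ*E*(E-1) + μ^2/2*E) / E := by
    field_simp
    ring
  rw [heq]
  exact div_nonpos_of_nonpos_of_nonneg hmain (le_of_lt hE0)

set_option maxHeartbeats 2000000 in
lemma comp13_mp (θ t μ : ℝ) :
    ∑ s : Fin 4 → Bool, cfnQuartet12_34 θ t s * Real.exp (-μ * (scoreVs13_24 s : ℝ))
      = 1 - ((1+t^2)^2 - 4*t^2*θ)/8 - (1-t^2)^2/8
        + ((1+t^2)^2 - 4*t^2*θ)/8 * Real.exp (-μ)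
        + (1-t^2)^2/8 * (Real.exp (-μ))⁻¹ := by
  have hE : Real.exp μ = (Real.exp (-μ))⁻¹ := by rw [← Real.exp_neg, neg_neg]
  rw [sum_pi4_mp]
  simp only [cfnQuartet12_34, cfnM, scoreVs13_24, Fintype.sum_bool, Matrix.cons_val_zero,
    Matrix.cons_val_one, Matrix.head_cons, Matrix.cons_val_two, Matrix.tail_cons,
    Matrix.cons_val_three]
  norm_num [hE, Real.exp_zero, mul_comm]
  have h0 : Real.exp (-μ) ≠ 0 := Real.exp_ne_zero _
  field_simp
  ring

set_option maxHeartbeats 2000000 in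
lemma comp14_mp (θ t μ : ℝ) :
    ∑ s : Fin 4 → Bool, cfnQuartet12_34 θ t s * Real.exp (-μ * (scoreVs14_23 s : ℝ))
      = 1 - ((1+t^2)^2 - 4*t^2*θ)/8 - (1-t^2)^2/8
        + ((1+t^2)^2 - 4*t^2*θ)/8 * Real.exp (-μ)
        + (1-t^2)^2/8 * (Real.exp (-μ))⁻¹ := by
  have hE : Real.exp μ = (Real.exp (-μ))⁻¹ := by rw [← Real.exp_neg, neg_neg]
  rw [sum_pi4_mp]
  simp only [cfnQuartet12_34, cfnM, scoreVs14_23, Fintype.sum_bool, Matrix.cons_val_zero,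
    Matrix.cons_val_one, Matrix.head_cons, Matrix.cons_val_two, Matrix.tail_cons,
    Matrix.cons_val_three]
  norm_num [hE, Real.exp_zero, mul_comm]
  have h0 : Real.exp (-μ) ≠ 0 := Real.exp_ne_zero _
  field_simp
  ring

set_option maxHeartbeats 1000000 in
lemma comp_sum_one_mp (θ t : ℝ) : ∑ s : Fin 4 → Bool, cfnQuartet12_34 θ t s = 1 := by
  rw [sum_pi4_mp]
  simp only [cfnQuartet12_34, cfnM, Fintype.sum_bool, Matrix.cons_val_zero,
    Matrix.cons_val_one, Matrix.head_cons, Matrix.cons_val_two, Matrix.tail_cons,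
    Matrix.cons_val_three]
  norm_num
  ring

/-- The per-site exponential moment bound. -/
lemma per_site_mp (θ t : ℝ) (hθ0 : 0 < θ) (hθ1 : θ < 1) (ht0 : 0 < t) (ht1 : t < 1)
    (Z : ℝ)
    (hZ : Z = 1 - ((1+t^2)^2 - 4*t^2*θ)/8 - (1-t^2)^2/8
        + ((1+t^2)^2 - 4*t^2*θ)/8 * Real.exp (-(t^2*(1-θ)/2))
        + (1-t^2)^2/8 * (Real.exp (-(t^2*(1-θ)/2)))⁻¹) :
    Z ≤ Real.exp (-((t^2*(1-θ)/2)^2/2)) := by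
  set μ := t^2*(1-θ)/2 with hμdef
  set E := Real.exp (-μ) with hEdef
  set B := (1-t^2)^2/8 with hBdef
  have ht2 : 0 < t^2 := by positivity
  have ht2' : t^2 < 1 := by nlinarith
  have hμ0 : 0 < μ := by
    rw [hμdef]
    apply div_pos (mul_pos (pow_pos ht0 2) (by linarith)) (by norm_num)
  have hμh : μ ≤ 1/2 := by rw [hμdef]; nlinarith
  have hB0 : 0 ≤ B := by rw [hBdef]; positivity
  have hB8 : B ≤ 1/8 := by rw [hBdef]; nlinarith
  have hE0 : 0 < E := Real.exp_pos _
  have hE1 : 1 - μ ≤ E := by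
    have := Real.add_one_le_exp (-μ)
    rw [hEdef]; linarith
  have hE2 : E ≤ 1 - μ + μ^2/2 := exp_neg_le_mp μ (le_of_lt hμ0)
  have hA : ((1+t^2)^2 - 4*t^2*θ)/8 = B + μ := by rw [hBdef, hμdef]; ring
  have hG : B*(E + E⁻¹ - 2) + μ*(E-1) + μ^2/2 ≤ 0 :=
    key_ineq_mp B μ E hB0 hB8 hμ0 hμh hE0 hE1 hE2
  have hZ' : Z = 1 + ((B+μ)*(E-1) + B*(E⁻¹-1)) := by rw [hZ, hA]; ring
  have hexp : 1 + ((B+μ)*(E-1) + B*(E⁻¹-1))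
      ≤ Real.exp ((B+μ)*(E-1) + B*(E⁻¹-1)) := by
    have := Real.add_one_le_exp ((B+μ)*(E-1) + B*(E⁻¹-1))
    linarith
  have harg : (B+μ)*(E-1) + B*(E⁻¹-1) ≤ -(μ^2/2) := by nlinarith [hG]
  calc Z = 1 + ((B+μ)*(E-1) + B*(E⁻¹-1)) := hZ'
    _ ≤ Real.exp ((B+μ)*(E-1) + B*(E⁻¹-1)) := hexp
    _ ≤ Real.exp (-(μ^2/2)) := Real.exp_le_exp.mpr harg

lemma sum_prod_pow_mp {Ω : Type*} [Fintype Ω] [DecidableEq Ω] (h : Ω → ℝ) (k : ℕ) :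
    ∑ ω : Fin k → Ω, ∏ i, h (ω i) = (∑ s, h s)^k := by
  have h1 := Finset.prod_univ_sum (fun _ : Fin k => (Finset.univ : Finset Ω))
    (fun _ s => h s)
  rw [Fintype.piFinset_univ] at h1
  rw [← h1, Finset.prod_const, Finset.card_univ, Fintype.card_fin]

set_option maxHeartbeats 1000000 in
/-- Chernoff bound for the lower tail of a sum of i.i.d. integer-valued scores. -/
lemma chernoff_mp {Ω : Type*} [Fintype Ω] [DecidableEq Ω] (w : Ω → ℝ)
    (hw : ∀ s, 0 ≤ w s) (f : Ω → ℤ) (μ c : ℝ) (hμ : 0 ≤ μ)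
    (hZ : ∑ s, w s * Real.exp (-μ * (f s : ℝ)) ≤ Real.exp (-c)) (k : ℕ) :
    ∑ ω : Fin k → Ω, (if (∑ i, f (ω i)) ≤ 0 then ∏ i, w (ω i) else 0)
      ≤ Real.exp (-((k:ℝ) * c)) := by
  have step1 : ∀ ω : Fin k → Ω, (if (∑ i, f (ω i)) ≤ 0 then ∏ i, w (ω i) else 0)
      ≤ ∏ i, (w (ω i) * Real.exp (-μ * (f (ω i) : ℝ))) := by
    intro ω
    have hprod : ∏ i, (w (ω i) * Real.exp (-μ * (f (ω i):ℝ)))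
        = (∏ i, w (ω i)) * Real.exp (-μ * ((∑ i, f (ω i) : ℤ) : ℝ)) := by
      rw [Finset.prod_mul_distrib, ← Real.exp_sum]
      congr 1
      push_cast
      rw [Finset.mul_sum]
    have hp0 : 0 ≤ ∏ i, w (ω i) := Finset.prod_nonneg (fun i _ => hw _)
    by_cases h : (∑ i, f (ω i)) ≤ 0
    · rw [if_pos h, hprod]
      have hx : (0:ℝ) ≤ -μ * ((∑ i, f (ω i) : ℤ) : ℝ) := by
        have : ((∑ i, f (ω i) : ℤ) : ℝ) ≤ 0 := by exact_mod_cast h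
        nlinarith
      have h1 : (1:ℝ) ≤ Real.exp (-μ * ((∑ i, f (ω i) : ℤ) : ℝ)) := Real.one_le_exp hx
      nlinarith
    · rw [if_neg h]
      exact Finset.prod_nonneg (fun i _ => mul_nonneg (hw _) (Real.exp_pos _).le)
  have hZ0 : 0 ≤ ∑ s, w s * Real.exp (-μ * (f s : ℝ)) :=
    Finset.sum_nonneg (fun s _ => mul_nonneg (hw _) (Real.exp_pos _).le)
  calc ∑ ω : Fin k → Ω, (if (∑ i, f (ω i)) ≤ 0 then ∏ i, w (ω i) else 0)
      ≤ ∑ ω : Fin k → Ω, ∏ i, (w (ω i) * Real.exp (-μ * (f (ω i) : ℝ))) :=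
        Finset.sum_le_sum (fun ω _ => step1 ω)
    _ = (∑ s, w s * Real.exp (-μ * (f s : ℝ)))^k := sum_prod_pow_mp (fun s => w s * Real.exp (-μ * (f s : ℝ))) k
    _ ≤ (Real.exp (-c))^k := pow_le_pow_left₀ hZ0 hZ k
    _ = Real.exp (-((k:ℝ) * c)) := by
        rw [← Real.exp_nat_mul]
        ring_nf

end Aux

/-- Non-asymptotic (Hoeffding/Azuma) form of **Theorem 2 of the paper**: for `k` sites
drawn i.i.d. from the CFN quartet distribution on the tree `12|34` with terminal edge
parameters `θ^p` and interior edge parameter `θ`, maximum parsimony strictly prefers the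
true topology over both alternatives (i.e. `Y_k > 0` and `Ỹ_k > 0`) with probability at
least `1 - 2·exp(-k·θ^{4p}(1-θ)²/8)`. -/
theorem mp_reconstruction_hoeffding_bound (p θ : ℝ) (hp : 1 < p)
    (hθ : θ ∈ Set.Ioo (0 : ℝ) 1) (k : ℕ) :
    1 - 2 * Real.exp (-(k : ℝ) * θ ^ (4 * p) * (1 - θ) ^ 2 / 8) ≤
      ∑ ω : Fin k → Fin 4 → Bool,
        (if 0 < ∑ i : Fin k, scoreVs13_24 (ω i) ∧ 0 < ∑ i : Fin k, scoreVs14_23 (ω i) then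
          ∏ i : Fin k, cfnQuartet12_34 θ (θ ^ p) (ω i) else 0) := by
  obtain ⟨hθ0, hθ1⟩ := hθ
  set t := θ ^ p with htdef
  have ht0 : 0 < t := Real.rpow_pos_of_pos hθ0 p
  have ht1 : t < 1 := Real.rpow_lt_one (le_of_lt hθ0) hθ1 (by linarith)
  set μ := t^2*(1-θ)/2 with hμdef
  set c := μ^2/2 with hcdef
  have hμ0 : 0 < μ := by
    rw [hμdef]
    apply div_pos (mul_pos (pow_pos ht0 2) (by linarith)) (by norm_num)
  set w := cfnQuartet12_34 θ t with hwdef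
  have hw0 : ∀ s, 0 ≤ w s := by
    intro s
    refine Finset.sum_nonneg (fun u _ => Finset.sum_nonneg (fun v _ => ?_))
    have hM : ∀ (η : ℝ), 0 ≤ η → η ≤ 1 → ∀ a b, 0 ≤ cfnM η a b := by
      intro η h0 h1 a b
      unfold cfnM
      split <;> linarith
    have hMθ := hM θ (le_of_lt hθ0) (le_of_lt hθ1)
    have hMt := hM t (le_of_lt ht0) (le_of_lt ht1)
    exact mul_nonneg (mul_nonneg (mul_nonneg (mul_nonneg (mul_nonneg
      (by norm_num : (0:ℝ) ≤ 1/2) (hMθ u v)) (hMt u (s 0))) (hMt u (s 1)))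
      (hMt v (s 2))) (hMt v (s 3))
  -- per-site exponential moment bounds
  have hZ13 : ∑ s, w s * Real.exp (-μ * (scoreVs13_24 s : ℝ)) ≤ Real.exp (-c) := by
    rw [hwdef]
    exact per_site_mp θ t hθ0 hθ1 ht0 ht1 _ (comp13_mp θ t μ)
  have hZ14 : ∑ s, w s * Real.exp (-μ * (scoreVs14_23 s : ℝ)) ≤ Real.exp (-c) := by
    rw [hwdef]
    exact per_site_mp θ t hθ0 hθ1 ht0 ht1 _ (comp14_mp θ t μ)
  have hC13 := chernoff_mp w hw0 scoreVs13_24 μ c (le_of_lt hμ0) hZ13 k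
  have hC14 := chernoff_mp w hw0 scoreVs14_23 μ c (le_of_lt hμ0) hZ14 k
  -- normalization
  have hTot : ∑ ω : Fin k → Fin 4 → Bool, ∏ i, w (ω i) = 1 := by
    rw [sum_prod_pow_mp, comp_sum_one_mp, one_pow]
  -- pointwise splitting
  have hsplit : ∀ ω : Fin k → Fin 4 → Bool,
      (∏ i, w (ω i)) -
        ((if (∑ i, scoreVs13_24 (ω i)) ≤ 0 then ∏ i, w (ω i) else 0) +
         (if (∑ i, scoreVs14_23 (ω i)) ≤ 0 then ∏ i, w (ω i) else 0))
      ≤ (if 0 < ∑ i : Fin k, scoreVs13_24 (ω i) ∧ 0 < ∑ i : Fin k, scoreVs14_23 (ω i) then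
          ∏ i : Fin k, w (ω i) else 0) := by
    intro ω
    have hp0 : 0 ≤ ∏ i, w (ω i) := Finset.prod_nonneg (fun i _ => hw0 _)
    by_cases h1 : (∑ i, scoreVs13_24 (ω i)) ≤ 0
    · rw [if_pos h1]
      have hcond : ¬ (0 < ∑ i : Fin k, scoreVs13_24 (ω i) ∧
          0 < ∑ i : Fin k, scoreVs14_23 (ω i)) := by
        intro hc; exact absurd h1 (not_le.mpr hc.1)
      rw [if_neg hcond]
      split <;> linarith
    · rw [if_neg h1]
      by_cases h2 : (∑ i, scoreVs14_23 (ω i)) ≤ 0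
      · rw [if_pos h2]
        have hcond : ¬ (0 < ∑ i : Fin k, scoreVs13_24 (ω i) ∧
            0 < ∑ i : Fin k, scoreVs14_23 (ω i)) := by
          intro hc; exact absurd h2 (not_le.mpr hc.2)
        rw [if_neg hcond]
        linarith
      · rw [if_neg h2]
        have hcond : 0 < ∑ i : Fin k, scoreVs13_24 (ω i) ∧
            0 < ∑ i : Fin k, scoreVs14_23 (ω i) := ⟨not_le.mp h1, not_le.mp h2⟩
        rw [if_pos hcond]
        linarith
  have hsum : ∑ ω : Fin k → Fin 4 → Bool,
      ((∏ i, w (ω i)) -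
        ((if (∑ i, scoreVs13_24 (ω i)) ≤ 0 then ∏ i, w (ω i) else 0) +
         (if (∑ i, scoreVs14_23 (ω i)) ≤ 0 then ∏ i, w (ω i) else 0)))
      ≤ ∑ ω : Fin k → Fin 4 → Bool,
        (if 0 < ∑ i : Fin k, scoreVs13_24 (ω i) ∧ 0 < ∑ i : Fin k, scoreVs14_23 (ω i) then
          ∏ i : Fin k, w (ω i) else 0) :=
    Finset.sum_le_sum (fun ω _ => hsplit ω)
  rw [Finset.sum_sub_distrib, Finset.sum_add_distrib, hTot] at hsum
  -- identify the exponent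
  have h4p : θ ^ (4 * p) = t ^ (4:ℕ) := by
    rw [htdef, show (4:ℝ) * p = p * ((4:ℕ):ℝ) by push_cast; ring,
      Real.rpow_mul (le_of_lt hθ0), Real.rpow_natCast]
  have hexp_eq : -(k : ℝ) * θ ^ (4 * p) * (1 - θ) ^ 2 / 8 = -((k:ℝ) * c) := by
    rw [h4p, hcdef, hμdef]
    ring
  rw [hexp_eq]
  calc 1 - 2 * Real.exp (-((k:ℝ) * c))
      ≤ 1 - ((∑ ω : Fin k → Fin 4 → Bool,
          (if (∑ i, scoreVs13_24 (ω i)) ≤ 0 then ∏ i, w (ω i) else 0)) +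
         (∑ ω : Fin k → Fin 4 → Bool,
          (if (∑ i, scoreVs14_23 (ω i)) ≤ 0 then ∏ i, w (ω i) else 0))) := by
        linarith [hC13, hC14]
    _ ≤ ∑ ω : Fin k → Fin 4 → Bool,
        (if 0 < ∑ i : Fin k, scoreVs13_24 (ω i) ∧ 0 < ∑ i : Fin k, scoreVs14_23 (ω i) then
          ∏ i : Fin k, w (ω i) else 0) := hsum
end

section
/- Let ε ∈ (0,1) and let p > 1 be a real number. Set θ' = 2p/(2p+1) and α_p = (θ')^{2p}·p/(2p+1). Let k be a positive integer with k ≥ 8·(p/α_p)²·log(2/ε), and let k site patterns be drawn i.i.d. from the CFN quartet distribution on {α,β}^4 for topology 12|34 with edge parameter (θ')^p on each terminal edge and θ' on the interior edge. Let Y_k be the number of sampled patterns lying in {ααββ, ββαα} minus the number lying in {αβαβ, βαβα}, and let Ỹ_k be the number of sampled patterns lying in {ααββ, ββαα} minus the number lying in {αββα, βααβ}. Then ℙ(Y_k > 0 and Ỹ_k > 0) ≥ 1 − ε; that is, there exists an interior branch length x (namely x = −(1/2)log θ') for which the maximum-parsimony reconstruction probability is at least 1 − ε whenever k ≥ 8·(p/α_p)²·log(2/ε).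 -/
open scoped BigOperators

/-! ### Auxiliary lemmas -/

private def mpAuxEquiv4 : (Bool × Bool × Bool × Bool) ≃ (Fin 4 → Bool) where
  toFun x := ![x.1, x.2.1, x.2.2.1, x.2.2.2]
  invFun s := (s 0, s 1, s 2, s 3)
  left_inv x := rfl
  right_inv s := by funext i; fin_cases i <;> simp

private lemma mp_sum_pi4 (f : (Fin 4 → Bool) → ℝ) :
    ∑ s : Fin 4 → Bool, f s
      = ∑ a : Bool, ∑ b : Bool, ∑ c : Bool, ∑ d : Bool, f ![a,b,c,d] := by
  rw [← Equiv.sum_comp mpAuxEquiv4 f, Fintype.sum_prod_type]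
  congr 1; funext a
  rw [Fintype.sum_prod_type]
  congr 1; funext b
  rw [Fintype.sum_prod_type]
  rfl

private lemma mp_sum_q (y t : ℝ) : ∑ s : Fin 4 → Bool, cfnQuartet12_34 y t s = 1 := by
  rw [mp_sum_pi4]
  simp only [cfnQuartet12_34, cfnM, Fintype.sum_bool, Matrix.cons_val]
  norm_num
  ring

private lemma mp_sum_qX13 (y t : ℝ) :
    ∑ s : Fin 4 → Bool, (scoreVs13_24 s : ℝ) * cfnQuartet12_34 y t s = t^2 * (1-y)/2 := by
  rw [mp_sum_pi4]
  simp only [cfnQuartet12_34, cfnM, scoreVs13_24, Fintype.sum_bool, Matrix.cons_val]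
  norm_num
  ring

private lemma mp_sum_qX14 (y t : ℝ) :
    ∑ s : Fin 4 → Bool, (scoreVs14_23 s : ℝ) * cfnQuartet12_34 y t s = t^2 * (1-y)/2 := by
  rw [mp_sum_pi4]
  simp only [cfnQuartet12_34, cfnM, scoreVs14_23, Fintype.sum_bool, Matrix.cons_val]
  norm_num
  ring

private lemma mp_score13_range :
    ∀ s, scoreVs13_24 s = -1 ∨ scoreVs13_24 s = 0 ∨ scoreVs13_24 s = 1 := by decide

private lemma mp_score14_range :
    ∀ s, scoreVs14_23 s = -1 ∨ scoreVs14_23 s = 0 ∨ scoreVs14_23 s = 1 := by decide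

private lemma mp_cfnM_nonneg {η : ℝ} (h0 : -1 ≤ η) (h1 : η ≤ 1) (a b : Bool) :
    0 ≤ cfnM η a b := by
  unfold cfnM; split_ifs <;> linarith

private lemma mp_cfnQuartet_nonneg {y t : ℝ} (hy0 : -1 ≤ y) (hy1 : y ≤ 1)
    (ht0 : -1 ≤ t) (ht1 : t ≤ 1) (s : Fin 4 → Bool) : 0 ≤ cfnQuartet12_34 y t s := by
  refine Finset.sum_nonneg fun u _ => Finset.sum_nonneg fun v _ => ?_
  have h1 := mp_cfnM_nonneg hy0 hy1 u v
  have h2 := mp_cfnM_nonneg ht0 ht1 u (s 0)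
  have h3 := mp_cfnM_nonneg ht0 ht1 u (s 1)
  have h4 := mp_cfnM_nonneg ht0 ht1 v (s 2)
  have h5 := mp_cfnM_nonneg ht0 ht1 v (s 3)
  positivity

private lemma mp_cosh_chord (μ : ℝ) (x : ℤ) (hx : x = -1 ∨ x = 0 ∨ x = 1) :
    Real.exp (-(μ * x)) ≤ Real.cosh μ - x * Real.sinh μ := by
  rcases hx with h | h | h <;> subst h <;> push_cast
  · rw [show -(μ * (-1:ℝ)) = μ by ring]
    rw [show Real.cosh μ - (-1:ℝ) * Real.sinh μ = Real.cosh μ + Real.sinh μ by ring,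
      Real.cosh_add_sinh]
  · simpa using Real.one_le_cosh μ
  · rw [show -(μ * (1:ℝ)) = -μ by ring]
    rw [show Real.cosh μ - (1:ℝ) * Real.sinh μ = Real.cosh μ - Real.sinh μ by ring,
      Real.cosh_sub_sinh]

private lemma mp_cosh_key (μ : ℝ) (hμ : 0 ≤ μ) :
    Real.cosh μ - μ * Real.sinh μ ≤ 1 - μ^2/2 := by
  set f : ℝ → ℝ := fun x => 1 + x * Real.sinh x - Real.cosh x - x^2/2 with hf
  have hder : ∀ x : ℝ, HasDerivAt f (x * Real.cosh x - x) x := by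
    intro x
    have h1 : HasDerivAt (fun x : ℝ => x * Real.sinh x) (1 * Real.sinh x + x * Real.cosh x) x :=
      (hasDerivAt_id x).mul (Real.hasDerivAt_sinh x)
    have h2 : HasDerivAt (fun x : ℝ => x^2/2) (x) x := by
      have := (hasDerivAt_pow 2 x).div_const 2
      simpa using this
    have := ((h1.const_add 1).sub (Real.hasDerivAt_cosh x)).sub h2
    exact this.congr_deriv (by ring)
  have hmono : MonotoneOn f (Set.Ici (0:ℝ)) := by
    apply monotoneOn_of_deriv_nonneg (convex_Ici 0)
    · exact (Continuous.continuousOn (by continuity))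
    · intro x _
      exact (hder x).differentiableAt.differentiableWithinAt
    · intro x hx
      rw [(hder x).deriv]
      rw [interior_Ici] at hx
      have h1 : 1 ≤ Real.cosh x := Real.one_le_cosh x
      nlinarith [le_of_lt (Set.mem_Ioi.mp hx)]
  have h0 : f 0 ≤ f μ := hmono (Set.mem_Ici.mpr le_rfl) (Set.mem_Ici.mpr hμ) hμ
  simp only [hf] at h0
  simp only [Real.sinh_zero, Real.cosh_zero] at h0
  nlinarith [h0]

private lemma mp_chernoff_bound (q : (Fin 4 → Bool) → ℝ) (hq0 : ∀ s, 0 ≤ q s)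
    (hq1 : ∑ s, q s = 1)
    (X : (Fin 4 → Bool) → ℤ) (hX : ∀ s, X s = -1 ∨ X s = 0 ∨ X s = 1)
    (μ : ℝ) (hμ0 : 0 ≤ μ) (hmean : ∑ s, (X s : ℝ) * q s = μ) (k : ℕ) :
    ∑ ω : Fin k → Fin 4 → Bool,
        (if (∑ i, X (ω i)) ≤ 0 then ∏ i, q (ω i) else 0)
      ≤ Real.exp (-((k : ℝ) * μ^2 / 2)) := by
  set g : (Fin 4 → Bool) → ℝ := fun s => q s * Real.exp (-(μ * (X s : ℝ))) with hg
  have hg0 : ∀ s, 0 ≤ g s := fun s => mul_nonneg (hq0 s) (Real.exp_pos _).le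
  have hpt : ∀ ω : Fin k → Fin 4 → Bool,
      (if (∑ i, X (ω i)) ≤ 0 then ∏ i, q (ω i) else 0) ≤ ∏ i, g (ω i) := by
    intro ω
    have hprod : ∏ i, g (ω i) =
        (∏ i, q (ω i)) * Real.exp (-(μ * ((∑ i, X (ω i) : ℤ) : ℝ))) := by
      rw [show (-(μ * ((∑ i, X (ω i) : ℤ) : ℝ))) = ∑ i, -(μ * ((X (ω i) : ℤ) : ℝ)) by
        push_cast; rw [Finset.mul_sum, ← Finset.sum_neg_distrib]]
      rw [Real.exp_sum, ← Finset.prod_mul_distrib]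
    split_ifs with h
    · rw [hprod]
      nth_rewrite 1 [show (∏ i, q (ω i)) = (∏ i, q (ω i)) * 1 by ring]
      apply mul_le_mul_of_nonneg_left _ (Finset.prod_nonneg fun i _ => hq0 (ω i))
      rw [show (1:ℝ) = Real.exp 0 by simp]
      apply Real.exp_le_exp.mpr
      have : ((∑ i, X (ω i) : ℤ) : ℝ) ≤ 0 := by exact_mod_cast h
      nlinarith
    · exact Finset.prod_nonneg fun i _ => hg0 (ω i)
  calc ∑ ω : Fin k → Fin 4 → Bool, (if (∑ i, X (ω i)) ≤ 0 then ∏ i, q (ω i) else 0)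
      ≤ ∑ ω : Fin k → Fin 4 → Bool, ∏ i, g (ω i) :=
        Finset.sum_le_sum fun ω _ => hpt ω
    _ = (∑ s, g s) ^ k := by
        rw [← Fintype.piFinset_univ, ← Finset.prod_univ_sum (fun _ => Finset.univ) (fun _ s => g s)]
        simp
    _ ≤ (Real.exp (-(μ^2/2))) ^ k := by
        apply pow_le_pow_left₀ (Finset.sum_nonneg fun s _ => hg0 s)
        calc ∑ s, g s ≤ ∑ s, q s * (Real.cosh μ - (X s : ℝ) * Real.sinh μ) :=
              Finset.sum_le_sum fun s _ =>
                mul_le_mul_of_nonneg_left (mp_cosh_chord μ (X s) (hX s)) (hq0 s)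
          _ = (∑ s, q s) * Real.cosh μ - (∑ s, (X s : ℝ) * q s) * Real.sinh μ := by
              rw [Finset.sum_mul, Finset.sum_mul, ← Finset.sum_sub_distrib]
              congr 1; funext s; ring
          _ = Real.cosh μ - μ * Real.sinh μ := by rw [hq1, hmean]; ring
          _ ≤ 1 - μ^2/2 := mp_cosh_key μ hμ0
          _ ≤ Real.exp (-(μ^2/2)) := by
              have := Real.add_one_le_exp (-(μ^2/2)); linarith
    _ = Real.exp (-((k : ℝ) * μ^2 / 2)) := by
        rw [← Real.exp_nat_mul]; congr 1; ring

/-- Non-asymptotic form of **Theorem 2 of the paper**. -/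
theorem mp_reconstruction_prob_at_opt_theta (ε p : ℝ) (hε : ε ∈ Set.Ioo (0 : ℝ) 1)
    (hp : 1 < p) (k : ℕ) (hk : 0 < k)
    (hklb : (k : ℝ) ≥
      8 * (p / ((2 * p / (2 * p + 1)) ^ (2 * p) * (p / (2 * p + 1)))) ^ 2 *
        Real.log (2 / ε)) :
    1 - ε ≤
      ∑ ω : Fin k → Fin 4 → Bool,
        (if 0 < ∑ i : Fin k, scoreVs13_24 (ω i) ∧ 0 < ∑ i : Fin k, scoreVs14_23 (ω i) then
          ∏ i : Fin k, cfnQuartet12_34 (2 * p / (2 * p + 1)) ((2 * p / (2 * p + 1)) ^ p) (ω i)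
        else 0) := by
  obtain ⟨hε0, hε1⟩ := hε
  have hp0 : 0 < p := lt_trans one_pos hp
  have h2p1 : (0:ℝ) < 2*p+1 := by linarith
  set y : ℝ := 2 * p / (2 * p + 1) with hy
  have hy0 : 0 < y := by positivity
  have hy1 : y < 1 := by rw [hy, div_lt_one h2p1]; linarith
  set t : ℝ := y ^ p with ht
  have ht0 : 0 < t := Real.rpow_pos_of_pos hy0 p
  have ht1 : t ≤ 1 := by
    rw [ht]; exact Real.rpow_le_one hy0.le hy1.le hp0.le
  set q : (Fin 4 → Bool) → ℝ := cfnQuartet12_34 y t with hqdef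
  have hq0 : ∀ s, 0 ≤ q s := fun s =>
    mp_cfnQuartet_nonneg (by linarith) hy1.le (by linarith) ht1 s
  have hq1 : ∑ s, q s = 1 := mp_sum_q y t
  set μ : ℝ := t^2 * (1-y)/2 with hμdef
  have hμ0 : 0 < μ := by
    have h1 : 0 < t^2 := by positivity
    nlinarith
  -- key numeric inequality
  have hyt : y ^ (2*p) = t ^ 2 := by
    rw [ht, show (2*p) = p * 2 by ring, Real.rpow_mul hy0.le,
      show ((2:ℝ)) = ((2:ℕ):ℝ) by norm_num, Real.rpow_natCast]
  rw [hyt] at hklb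
  have hL : 0 < Real.log (2/ε) := Real.log_pos (by rw [lt_div_iff₀ hε0]; linarith)
  have hμveq : μ = t^2/(2*(2*p+1)) := by
    rw [hμdef, hy]; field_simp; ring
  have hCeq : 8 * (p / (t^2 * (p/(2*p+1))))^2 = 2/μ^2 := by
    rw [hμveq]; field_simp; ring
  rw [hCeq] at hklb
  have hkey : Real.log (2/ε) ≤ (k:ℝ) * μ^2 / 2 := by
    have hμ2 : (0:ℝ) < μ^2 := by positivity
    have h2 : 2/μ^2 * Real.log (2/ε) * μ^2 ≤ (k:ℝ) * μ^2 :=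
      mul_le_mul_of_nonneg_right hklb hμ2.le
    have h3 : 2/μ^2 * Real.log (2/ε) * μ^2 = 2 * Real.log (2/ε) := by
      field_simp
    linarith
  have hexp : Real.exp (-((k:ℝ) * μ^2 / 2)) ≤ ε/2 := by
    rw [show ε/2 = Real.exp (Real.log (ε/2)) by rw [Real.exp_log (by positivity)]]
    apply Real.exp_le_exp.mpr
    have hlog : Real.log (ε/2) = - Real.log (2/ε) := by
      rw [← Real.log_inv, inv_div]
    linarith
  have hbad13 : ∑ ω : Fin k → Fin 4 → Bool,
      (if (∑ i, scoreVs13_24 (ω i)) ≤ 0 then ∏ i, q (ω i) else 0) ≤ ε/2 :=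
    le_trans (mp_chernoff_bound q hq0 hq1 scoreVs13_24 mp_score13_range μ hμ0.le
      (by rw [hμdef]; exact mp_sum_qX13 y t) k) hexp
  have hbad14 : ∑ ω : Fin k → Fin 4 → Bool,
      (if (∑ i, scoreVs14_23 (ω i)) ≤ 0 then ∏ i, q (ω i) else 0) ≤ ε/2 :=
    le_trans (mp_chernoff_bound q hq0 hq1 scoreVs14_23 mp_score14_range μ hμ0.le
      (by rw [hμdef]; exact mp_sum_qX14 y t) k) hexp
  have hmass : ∑ ω : Fin k → Fin 4 → Bool, ∏ i, q (ω i) = 1 := by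
    rw [← Fintype.piFinset_univ, ← Finset.prod_univ_sum (fun _ => Finset.univ) (fun _ s => q s)]
    simp [hq1]
  have hW0 : ∀ ω : Fin k → Fin 4 → Bool, 0 ≤ ∏ i, q (ω i) :=
    fun ω => Finset.prod_nonneg fun i _ => hq0 _
  have hpoint : ∀ ω ∈ (Finset.univ : Finset (Fin k → Fin 4 → Bool)),
      (∏ i, q (ω i)) - (if (∑ i, scoreVs13_24 (ω i)) ≤ 0 then ∏ i, q (ω i) else 0)
        - (if (∑ i, scoreVs14_23 (ω i)) ≤ 0 then ∏ i, q (ω i) else 0)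
      ≤ (if 0 < ∑ i, scoreVs13_24 (ω i) ∧ 0 < ∑ i, scoreVs14_23 (ω i)
          then ∏ i, q (ω i) else 0) := by
    intro ω _
    have h0 := hW0 ω
    split_ifs <;> first | linarith | (exfalso; omega)
  calc 1 - ε = 1 - ε/2 - ε/2 := by ring
    _ ≤ (∑ ω : Fin k → Fin 4 → Bool, ∏ i, q (ω i))
        - (∑ ω : Fin k → Fin 4 → Bool,
            if (∑ i, scoreVs13_24 (ω i)) ≤ 0 then ∏ i, q (ω i) else 0)
        - (∑ ω : Fin k → Fin 4 → Bool,
            if (∑ i, scoreVs14_23 (ω i)) ≤ 0 then ∏ i, q (ω i) else 0) := by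
        rw [hmass]; linarith
    _ = ∑ ω : Fin k → Fin 4 → Bool, ((∏ i, q (ω i))
        - (if (∑ i, scoreVs13_24 (ω i)) ≤ 0 then ∏ i, q (ω i) else 0)
        - (if (∑ i, scoreVs14_23 (ω i)) ≤ 0 then ∏ i, q (ω i) else 0)) := by
        rw [Finset.sum_sub_distrib, Finset.sum_sub_distrib]
    _ ≤ _ := Finset.sum_le_sum hpoint
end

section
/- Let p ≥ 1 be a real number, ε ∈ (0,1), and set x = 1/(4p) and Q = (1 − e^{−x})·(1 − e^{−px})⁴ = (1 − e^{−1/(4p)})·(1 − e^{−1/4})⁴. If k is a real number (in particular, a positive integer) with k ≥ 5·(1 − e^{−1/4})^{−4}·log(1/ε)·p, then (1 − Q)^k ≤ ε. In particular, a constant c'_ε depending only on ε exists (namely c'_ε = 5(1 − e^{−1/4})^{−4} log(1/ε)) such that whenever k ≥ c'_ε·p, there is an interior branch length x for which the probability that at least one of k i.i.d. random-cluster characters resolves the tree is at least 1 − ε. -/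
/-- **Proposition (random cluster model).**  Taking interior branch length `x = 1/(4p)`
(so terminal branch lengths are `p·x = 1/4`), a single random-cluster character resolves
the four-taxon tree with probability `Q = (1 - e^{-1/(4p)})(1 - e^{-1/4})⁴`.  Whenever
`k ≥ c'_ε · p` with `c'_ε = 5·(1 - e^{-1/4})⁻⁴·log(1/ε)` (a constant depending only on
`ε`), the probability `(1-Q)^k` that none of `k` i.i.d. characters resolves the tree is at
most `ε`; that is, maximum parsimony reconstructs the tree with probability at least
`1 - ε` from `k` characters of sequence length growing only linearly in `p`. -/
theorem random_cluster_linear_sequence_length (p ε : ℝ) (hp : 1 ≤ p)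
    (hε : ε ∈ Set.Ioo (0 : ℝ) 1) (k : ℝ)
    (hk : k ≥ 5 * ((1 - Real.exp (-(1 / 4 : ℝ))) ^ 4)⁻¹ * Real.log (1 / ε) * p) :
    (1 - (1 - Real.exp (-(1 / (4 * p)))) * (1 - Real.exp (-(1 / 4 : ℝ))) ^ 4) ^ k ≤ ε := by
  obtain ⟨hε0, hε1⟩ := hε
  have hp0 : (0:ℝ) < p := lt_of_lt_of_le one_pos hp
  set a : ℝ := 1 - Real.exp (-(1/4:ℝ)) with ha
  have ha0 : 0 < a := by
    have h : Real.exp (-(1/4:ℝ)) < 1 := Real.exp_lt_one_iff.mpr (by norm_num)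
    rw [ha]; linarith
  have ha1 : a ≤ 1 := by
    have h : 0 < Real.exp (-(1/4:ℝ)) := Real.exp_pos _
    rw [ha]; linarith
  have ha4 : 0 < a ^ 4 := by positivity
  have hL : 0 < Real.log (1/ε) := by
    apply Real.log_pos
    rw [one_div]
    exact (one_lt_inv_iff₀).mpr ⟨hε0, hε1⟩
  -- bound e^{-1/(4p)} ≤ 1 - 1/(5p)
  have hexp : Real.exp (-(1/(4*p))) ≤ 1 - 1/(5*p) := by
    have h1 : 1 + 1/(4*p) ≤ Real.exp (1/(4*p)) := by
      have := Real.add_one_le_exp (1/(4*p)); linarith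
    have hpos : (0:ℝ) < 1 + 1/(4*p) := by positivity
    have h2 : Real.exp (-(1/(4*p))) ≤ (1 + 1/(4*p))⁻¹ := by
      rw [Real.exp_neg]
      exact inv_anti₀ hpos h1
    have h3 : (1 + 1/(4*p))⁻¹ ≤ 1 - 1/(5*p) := by
      rw [inv_le_iff_one_le_mul₀ hpos]
      have h4p : (0:ℝ) < 4*p := by positivity
      have h5p : (0:ℝ) < 5*p := by positivity
      field_simp
      nlinarith
    linarith
  set Q : ℝ := (1 - Real.exp (-(1/(4*p)))) * a ^ 4 with hQ
  have hQ1 : Q ≤ 1 := by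
    have h1 : 1 - Real.exp (-(1/(4*p))) ≤ 1 := by
      have := Real.exp_pos (-(1/(4*p))); linarith
    have h2 : a^4 ≤ 1 := by
      calc a^4 ≤ 1^4 := pow_le_pow_left₀ ha0.le ha1 4
      _ = 1 := one_pow 4
    calc Q ≤ 1 * 1 := mul_le_mul h1 h2 ha4.le one_pos.le
    _ = 1 := one_mul 1
  have hQlb : a^4 / (5*p) ≤ Q := by
    have h1 : 1/(5*p) ≤ 1 - Real.exp (-(1/(4*p))) := by linarith
    have := mul_le_mul_of_nonneg_right h1 ha4.le
    calc a^4/(5*p) = 1/(5*p) * a^4 := by ring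
    _ ≤ Q := this
  have hQ0 : 0 < Q := lt_of_lt_of_le (by positivity) hQlb
  have hk0 : 0 ≤ k := le_trans (by positivity) hk
  -- key: Q * k ≥ log (1/ε)
  have hkey : Real.log (1/ε) ≤ Q * k := by
    have hkk : 5 * (a^4)⁻¹ * Real.log (1/ε) * p ≤ k := hk
    have h2 : a^4/(5*p) * (5 * (a^4)⁻¹ * Real.log (1/ε) * p) ≤ Q * k :=
      mul_le_mul hQlb hkk (by positivity) hQ0.le
    have h3 : a^4/(5*p) * (5 * (a^4)⁻¹ * Real.log (1/ε) * p) = Real.log (1/ε) := by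
      field_simp
    linarith
  -- conclude
  have hbase : (0:ℝ) ≤ 1 - Q := by linarith
  have hstep : 1 - Q ≤ Real.exp (-Q) := by
    have := Real.add_one_le_exp (-Q); linarith
  calc (1 - Q) ^ k ≤ Real.exp (-Q) ^ k := Real.rpow_le_rpow hbase hstep hk0
  _ = Real.exp (-Q * k) := by rw [← Real.exp_mul]
  _ ≤ Real.exp (Real.log ε) := by
      apply Real.exp_le_exp.mpr
      have : Real.log (1/ε) = - Real.log ε := by
        rw [one_div, Real.log_inv]
      nlinarith [hkey, this]
  _ = ε := Real.exp_log hε0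
end

section
/- Let S be a finite set, let τ ∈ [0,1] and l ≥ τ be real numbers, and let r, p', q' be probability distributions on S. Define probability distributions p and q on S by p_s = (1−τ)·r_s + τ·p'_s and q_s = (1−τ)·r_s + τ·q'_s, and suppose p_s > 0 for every s ∈ S. Then 2·(1 − Σ_{s∈S} √(p_s·q_s)) ≤ l² · Σ_{s∈S} (q'_s − p'_s)²/p_s. -/
open scoped BigOperators

lemma hellinger_aux (a b : ℝ) (ha : 0 < a) (hb : 0 ≤ b) :
    a + b - 2 * Real.sqrt (a * b) ≤ (b - a) ^ 2 / a := by
  have sa := Real.sqrt_nonneg a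
  have sb := Real.sqrt_nonneg b
  have ha2 := Real.sq_sqrt ha.le
  have hb2 := Real.sq_sqrt hb
  rw [Real.sqrt_mul ha.le, le_div_iff₀ ha]
  nlinarith [sq_nonneg (Real.sqrt a - Real.sqrt b), sq_nonneg (Real.sqrt a + Real.sqrt b),
    mul_nonneg sa sb, mul_nonneg (mul_nonneg sa sb) (sq_nonneg (Real.sqrt a - Real.sqrt b)),
    mul_nonneg hb (sq_nonneg (Real.sqrt a - Real.sqrt b))]

/-- **Lemma 4 of the paper** (abstract form).  Let `p = (1-τ)·r + τ·p'` and
`q = (1-τ)·r + τ·q'` be mixtures of probability distributions on a finite set `S`, with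
`τ ∈ [0,1]`, `τ ≤ l`, and `p` everywhere positive.  Then the squared Hellinger distance
between `p` and `q` satisfies `d_H²(p,q) ≤ l² · Σ_s (q'_s - p'_s)²/p_s`. -/
theorem hellinger_sq_mixture_bound {S : Type*} [Fintype S]
    (τ l : ℝ) (hτ : τ ∈ Set.Icc (0 : ℝ) 1) (hτl : τ ≤ l)
    (r p' q' : S → ℝ)
    (hr0 : ∀ s, 0 ≤ r s) (hr1 : ∑ s : S, r s = 1)
    (hp'0 : ∀ s, 0 ≤ p' s) (hp'1 : ∑ s : S, p' s = 1)
    (hq'0 : ∀ s, 0 ≤ q' s) (hq'1 : ∑ s : S, q' s = 1)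
    (hpos : ∀ s, 0 < (1 - τ) * r s + τ * p' s) :
    2 * (1 - ∑ s : S, Real.sqrt (((1 - τ) * r s + τ * p' s) * ((1 - τ) * r s + τ * q' s)))
      ≤ l ^ 2 * ∑ s : S, (q' s - p' s) ^ 2 / ((1 - τ) * r s + τ * p' s) := by
  obtain ⟨hτ0, hτ1⟩ := hτ
  set p : S → ℝ := fun s => (1 - τ) * r s + τ * p' s with hp
  set q : S → ℝ := fun s => (1 - τ) * r s + τ * q' s with hq
  have hq0 : ∀ s, 0 ≤ q s := fun s =>
    add_nonneg (mul_nonneg (by linarith) (hr0 s)) (mul_nonneg hτ0 (hq'0 s))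
  have hsp : ∑ s : S, p s = 1 := by
    simp only [hp, Finset.sum_add_distrib, ← Finset.mul_sum, hr1, hp'1]; ring
  have hsq : ∑ s : S, q s = 1 := by
    simp only [hq, Finset.sum_add_distrib, ← Finset.mul_sum, hr1, hq'1]; ring
  have key : ∀ s : S, p s + q s - 2 * Real.sqrt (p s * q s)
      ≤ l ^ 2 * ((q' s - p' s) ^ 2 / p s) := by
    intro s
    have h1 := hellinger_aux (p s) (q s) (hpos s) (hq0 s)
    have h2 : (q s - p s) ^ 2 / p s = τ ^ 2 * ((q' s - p' s) ^ 2 / p s) := by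
      have : q s - p s = τ * (q' s - p' s) := by simp only [hp, hq]; ring
      rw [this, mul_pow, mul_div_assoc]
    have h3 : τ ^ 2 ≤ l ^ 2 := by nlinarith
    have h4 : 0 ≤ (q' s - p' s) ^ 2 / p s := div_nonneg (sq_nonneg _) (hpos s).le
    calc p s + q s - 2 * Real.sqrt (p s * q s) ≤ (q s - p s) ^ 2 / p s := h1
      _ = τ ^ 2 * ((q' s - p' s) ^ 2 / p s) := h2
      _ ≤ l ^ 2 * ((q' s - p' s) ^ 2 / p s) := mul_le_mul_of_nonneg_right h3 h4
  have hsum : ∑ s : S, (p s + q s - 2 * Real.sqrt (p s * q s))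
      ≤ ∑ s : S, l ^ 2 * ((q' s - p' s) ^ 2 / p s) :=
    Finset.sum_le_sum (fun s _ => key s)
  have hlhs : ∑ s : S, (p s + q s - 2 * Real.sqrt (p s * q s))
      = 2 * (1 - ∑ s : S, Real.sqrt (p s * q s)) := by
    simp only [Finset.sum_sub_distrib, Finset.sum_add_distrib, hsp, hsq, ← Finset.mul_sum]
    ring
  rw [← Finset.mul_sum] at hsum
  show 2 * (1 - ∑ s : S, Real.sqrt (p s * q s)) ≤ l ^ 2 * ∑ s : S, (q' s - p' s) ^ 2 / p s
  rw [← hlhs]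
  exact hsum
end
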